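/- Let h be a differentiable function on an interval J ⊆ (0, 1] of positive reals such that v = sin(2πh(v)v) for all v ∈ J and cos(2πh(v)v) > 0 and h(v) > 1/(2π) and 2πh(v)cos(2πh(v)v) > 1 on J. Then h is strictly decreasing on J. -/

import Mathlib

open Real

theorem stmt_16 (J : Set ℝ) (hJ : J ⊆ Set.Ioc 0 1) (hJconv : Convex ℝ J)
    (h : ℝ → ℝ) (hdiff : ∀ v ∈ J, DifferentiableAt ℝ h v)
    (himp : ∀ v ∈ J, v = Real.sin (2 * π * h v * v))
    (hcos : ∀ v ∈ J, 0 < Real.cos (2 * π * h v * v))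
    (hh : ∀ v ∈ J, 1 / (2 * π) < h v)
    (hgt : ∀ v ∈ J, 1 < 2 * π * h v * Real.cos (2 * π * h v * v)) :
    StrictAntiOn h J := by
  apply StrictAntiOn.mono (s := J)
    (strictAntiOn_of_deriv_neg hJconv
      (fun v hv => (hdiff v hv).continuousAt.continuousWithinAt) ?_) (subset_refl J)
  intro v hv
  have hvJ : v ∈ J := interior_subset hv
  have hπ : (0:ℝ) < π := Real.pi_pos
  have hv0 : 0 < v := (hJ hvJ).1
  set c := Real.cos (2 * π * h v * v) with hc
  have hcpos : 0 < c := hcos v hvJ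
  -- derivative of inner function
  have hdh : HasDerivAt h (deriv h v) v := (hdiff v hvJ).hasDerivAt
  have hinner : HasDerivAt (fun x => 2 * π * h x * x)
      (2 * π * deriv h v * v + 2 * π * h v) v := by
    have : HasDerivAt (fun y => 2 * π * h y * y) (2 * π * deriv h v * v + 2 * π * h v * 1) v :=
      ((hdh.const_mul (2 * π)).mul (hasDerivAt_id v))
    simpa [mul_comm, mul_assoc, mul_left_comm] using this
  have hsin : HasDerivAt (fun x => Real.sin (2 * π * h x * x))
      (c * (2 * π * deriv h v * v + 2 * π * h v)) v := by
    simpa [hc, mul_comm] using hinner.sin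
  -- eventually sin(2πh x x) = x near v
  have hev : (fun x => Real.sin (2 * π * h x * x)) =ᶠ[nhds v] (fun x => x) := by
    filter_upwards [isOpen_interior.mem_nhds hv] with x hx
    exact (himp x (interior_subset hx)).symm
  have hid : HasDerivAt (fun x : ℝ => x)
      (c * (2 * π * deriv h v * v + 2 * π * h v)) v := hsin.congr_of_eventuallyEq hev.symm
  have heq : c * (2 * π * deriv h v * v + 2 * π * h v) = 1 :=
    hid.unique (hasDerivAt_id v)
  have hgt' := hgt v hvJ
  rw [← hc] at hgt'
  nlinarith [mul_pos (mul_pos (mul_pos two_pos hπ) hcpos) hv0]
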